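/- Let (X,d,μ) be an unbounded metric measure space, a ∈ X, p > 1, and (Ẋ, d̂_a, μ̂_a) its sphericalization with dμ̂_a(x) = dμ(x)/(1+d(x,a))^{2p}. Let Ω ⊂ X be open, u: Ω → [-∞,∞], and g: Ω → [0,∞] measurable, and set ĝ(x) = g(x)(1+d(x,a))^2. Then g is a p-weak upper gradient of u in Ω with respect to (d,μ) if and only if ĝ is a p-weak upper gradient of u in Ω with respect to (d̂_a, μ̂_a). -/
import Mathlib

open MeasureTheory Metric Set ENNReal Filter

/-- A (nonconstant, compact, rectifiable) curve with respect to a distance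
function `D`, parameterized by arc length on `[0, len]`
(so that it is `1`-Lipschitz with respect to `D`). -/
structure CurveD (Y : Type*) (D : Y → Y → ℝ) where
  toFun : ℝ → Y
  len : ℝ
  len_pos : 0 < len
  lip : ∀ s ∈ Set.Icc (0:ℝ) len, ∀ t ∈ Set.Icc (0:ℝ) len, D (toFun s) (toFun t) ≤ |s - t|

/-- The curve lies in the set `Ω`. -/
def CurveD.inSet {Y : Type*} {D : Y → Y → ℝ} (γ : CurveD Y D) (Ω : Set Y) : Prop :=
  ∀ t ∈ Set.Icc (0:ℝ) γ.len, γ.toFun t ∈ Ω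

/-- Line integral `∫_γ ρ ds̃`, where the arc length element is `ds̃ = w ds`. -/
noncomputable def lineInt {Y : Type*} {D : Y → Y → ℝ} (γ : CurveD Y D) (ρ w : Y → ℝ≥0∞) : ℝ≥0∞ :=
  ∫⁻ t in Set.Icc (0:ℝ) γ.len, ρ (γ.toFun t) * w (γ.toFun t)

/-- The `p`-modulus of a curve family `Γ`, with energy measure `μ` and arc
length weighted by `w`. -/
noncomputable def pMod {Y : Type*} [MeasurableSpace Y] {D : Y → Y → ℝ} (p : ℝ) (μ : Measure Y)
    (w : Y → ℝ≥0∞) (Γ : Set (CurveD Y D)) : ℝ≥0∞ :=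
  ⨅ (ρ : Y → ℝ≥0∞) (_ : Measurable ρ) (_ : ∀ γ ∈ Γ, 1 ≤ lineInt γ ρ w), ∫⁻ y, ρ y ^ p ∂μ

/-- The absolute value of an extended real, as an element of `[0,∞]`. -/
noncomputable def eAbs (x : EReal) : ℝ≥0∞ :=
  if max x (-x) = (⊤ : EReal) then ⊤ else ENNReal.ofReal (max x (-x)).toReal

/-- `g` is an upper gradient of `u : Ω → [-∞,∞]` (arc length weighted by `w`). -/
def IsUpperGradientOn {Y : Type*} (D : Y → Y → ℝ) (w : Y → ℝ≥0∞) (Ω : Set Y)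
    (u : Y → EReal) (g : Y → ℝ≥0∞) : Prop :=
  ∀ γ : CurveD Y D, γ.inSet Ω →
    eAbs (u (γ.toFun γ.len) - u (γ.toFun 0)) ≤ lineInt γ g w

/-- `g` is a `p`-weak upper gradient of `u` in `Ω`: the upper gradient
inequality holds along `p`-almost every curve. -/
def IsPWUGOn {Y : Type*} [MeasurableSpace Y] (D : Y → Y → ℝ) (p : ℝ) (μ : Measure Y)
    (w : Y → ℝ≥0∞) (Ω : Set Y) (u : Y → EReal) (g : Y → ℝ≥0∞) : Prop :=
  ∃ Γ₀ : Set (CurveD Y D), pMod p μ w Γ₀ = 0 ∧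
    ∀ γ : CurveD Y D, γ.inSet Ω → γ ∉ Γ₀ →
      eAbs (u (γ.toFun γ.len) - u (γ.toFun 0)) ≤ lineInt γ g w

/-- `g` has locally finite `p`-energy in `Ω`. -/
def IsLocLp {Y : Type*} [MetricSpace Y] [MeasurableSpace Y] (p : ℝ) (μ : Measure Y)
    (Ω : Set Y) (g : Y → ℝ≥0∞) : Prop :=
  ∀ x ∈ Ω, ∃ r > (0:ℝ), ∫⁻ y in Ω ∩ Metric.ball x r, g y ^ p ∂μ < ⊤

/-- `g` is the minimal `p`-weak upper gradient of `u` in `Ω`. -/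
def IsMinimalPWUGOn {Y : Type*} [MetricSpace Y] [MeasurableSpace Y] (D : Y → Y → ℝ) (p : ℝ)
    (μ : Measure Y) (w : Y → ℝ≥0∞) (Ω : Set Y) (u : Y → EReal) (g : Y → ℝ≥0∞) : Prop :=
  IsPWUGOn D p μ w Ω u g ∧ IsLocLp p μ Ω g ∧
    ∀ h : Y → ℝ≥0∞, IsPWUGOn D p μ w Ω u h → IsLocLp p μ Ω h →
      ∀ᵐ x ∂(μ.restrict Ω), g x ≤ h x

/-- The `p`-th power of the Newtonian norm of `u` on `Ω`. -/
noncomputable def NpNormP {Y : Type*} [MeasurableSpace Y] (D : Y → Y → ℝ) (p : ℝ)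
    (μ : Measure Y) (w : Y → ℝ≥0∞) (Ω : Set Y) (u : Y → EReal) : ℝ≥0∞ :=
  (∫⁻ x in Ω, eAbs (u x) ^ p ∂μ) +
    ⨅ (g : Y → ℝ≥0∞) (_ : IsUpperGradientOn D w Ω u g), ∫⁻ x in Ω, g x ^ p ∂μ

/-- The Sobolev capacity of `E`. -/
noncomputable def sobCap {Y : Type*} [MeasurableSpace Y] (D : Y → Y → ℝ) (p : ℝ)
    (μ : Measure Y) (w : Y → ℝ≥0∞) (E : Set Y) : ℝ≥0∞ :=
  ⨅ (u : Y → EReal) (_ : ∀ x ∈ E, 1 ≤ u x), NpNormP D p μ w Set.univ u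

/-- The sphericalized arc length weight `ds̃ = ds/(1+d(x,a))²`. -/
noncomputable def hatW {X : Type*} [MetricSpace X] (a : X) : X → ℝ≥0∞ :=
  fun x => ENNReal.ofReal ((1 + dist x a) ^ 2)⁻¹

/-- The sphericalization measure `dμ̂ₐ = dμ/(1+d(x,a))^{2p}`. -/
noncomputable def muHat {X : Type*} [MetricSpace X] [MeasurableSpace X] (μ : Measure X)
    (a : X) (p : ℝ) : Measure X :=
  μ.withDensity fun x => ENNReal.ofReal ((1 + dist x a) ^ (2 * p))⁻¹

/-- A `q`-Poincaré inequality for `(X,d,μ)`. -/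
def PoincareIneqP {X : Type*} [MetricSpace X] [MeasurableSpace X] (q : ℝ) (μ : Measure X) : Prop :=
  ∃ C > (0:ℝ), ∃ lam ≥ (1:ℝ), ∀ (u : X → ℝ) (g : X → ℝ≥0∞), Measurable u → Measurable g →
    MeasureTheory.LocallyIntegrable u μ →
    IsUpperGradientOn dist (fun _ => 1) Set.univ (fun x => (u x : EReal)) g →
    ∀ (x : X) (r : ℝ), 0 < r →
      ⨍⁻ y in Metric.ball x r, ENNReal.ofReal |u y - ⨍ z in Metric.ball x r, u z ∂μ| ∂μ ≤
        ENNReal.ofReal (C * Metric.diam (Metric.ball x r)) *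
          (⨍⁻ y in Metric.ball x (lam * r), g y ^ q ∂μ) ^ (1/q)

/-- `μ` is doubling and all balls have positive finite measure. -/
def DoublingMeas {X : Type*} [MetricSpace X] [MeasurableSpace X] (μ : Measure X) : Prop :=
  (∀ (x : X) (r : ℝ), 0 < r → 0 < μ (Metric.ball x r) ∧ μ (Metric.ball x r) < ⊤) ∧
    ∃ C > (0:ℝ), ∀ (x : X) (r : ℝ), 0 < r →
      μ (Metric.ball x (2 * r)) ≤ ENNReal.ofReal C * μ (Metric.ball x r)

/-- `μ` is Ahlfors `Q`-regular. -/
def AhlforsRegular {X : Type*} [MetricSpace X] [MeasurableSpace X] (μ : Measure X) (Q : ℝ) : Prop :=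
  ∃ C > (0:ℝ), ∀ (x : X) (r : ℝ), 0 < r →
    ENNReal.ofReal (C⁻¹ * r ^ Q) ≤ μ (Metric.ball x r) ∧
      μ (Metric.ball x r) ≤ ENNReal.ofReal (C * r ^ Q)

section SphAux

variable {X : Type*} [MetricSpace X] [MeasurableSpace X] [BorelSpace X]

private lemma sph_pos (a x : X) : (0:ℝ) < (1 + dist x a) ^ 2 := by positivity

private lemma sph_rpow_pos (a x : X) (p : ℝ) : (0:ℝ) < (1 + dist x a) ^ (2 * p) :=
  Real.rpow_pos_of_pos (by positivity) _

private lemma sph_pow_eq (a x : X) (p : ℝ) :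
    ((1 + dist x a) ^ 2 : ℝ) ^ p = (1 + dist x a) ^ (2 * p) := by
  rw [← Real.rpow_natCast (1 + dist x a) 2, ← Real.rpow_mul (by positivity)]
  norm_num

private lemma sph_cancel (a x : X) :
    ENNReal.ofReal ((1 + dist x a) ^ 2) * ENNReal.ofReal (((1 + dist x a) ^ 2)⁻¹) = 1 := by
  have h := sph_pos a x
  rw [← ENNReal.ofReal_mul h.le, mul_inv_cancel₀ h.ne', ENNReal.ofReal_one]

private lemma sph_cancel' (a x : X) (p : ℝ) :
    ENNReal.ofReal ((1 + dist x a) ^ (2 * p)) * ENNReal.ofReal (((1 + dist x a) ^ (2 * p))⁻¹) = 1 := by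
  have h := sph_rpow_pos a x p
  rw [← ENNReal.ofReal_mul h.le, mul_inv_cancel₀ h.ne', ENNReal.ofReal_one]

private lemma sph_meas (a : X) : Measurable fun x : X => ENNReal.ofReal ((1 + dist x a) ^ 2) := by
  fun_prop

private lemma sph_meas_inv (a : X) :
    Measurable fun x : X => ENNReal.ofReal (((1 + dist x a) ^ (2 * p))⁻¹) := by
  fun_prop

/-- Line integral with respect to the sphericalized weight of `ρ·(1+d)²` equals the
unweighted line integral of `ρ`. -/
private lemma sph_lineInt (a : X) (γ : CurveD X dist) (ρ : X → ℝ≥0∞) :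
    lineInt γ (fun x => ρ x * ENNReal.ofReal ((1 + dist x a) ^ 2)) (hatW a)
      = lineInt γ ρ (fun _ => 1) := by
  refine lintegral_congr fun t => ?_
  simp only [hatW, mul_assoc, sph_cancel, mul_one]

/-- Energy identity: `∫ (ρ(1+d)²)^p dμ̂ₐ = ∫ ρ^p dμ`. -/
private lemma sph_energy (μ : Measure X) (a : X) {p : ℝ} (hp : 0 ≤ p) {ρ : X → ℝ≥0∞}
    (hρ : Measurable ρ) :
    ∫⁻ y, (ρ y * ENNReal.ofReal ((1 + dist y a) ^ 2)) ^ p ∂(muHat μ a p)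
      = ∫⁻ y, ρ y ^ p ∂μ := by
  rw [muHat, MeasureTheory.lintegral_withDensity_eq_lintegral_mul μ (by fun_prop)
    (g := fun y => (ρ y * ENNReal.ofReal ((1 + dist y a) ^ 2)) ^ p) (by fun_prop)]
  refine lintegral_congr fun y => ?_
  simp only [Pi.mul_apply]
  rw [ENNReal.mul_rpow_of_nonneg _ _ hp, ENNReal.ofReal_rpow_of_pos (sph_pos a y),
    sph_pow_eq a y p, mul_comm, mul_assoc, sph_cancel' a y p, mul_one]

/-- Reverse energy identity: `∫ (ρ/(1+d)²)^p dμ = ∫ ρ^p dμ̂ₐ`. -/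
private lemma sph_energy' (μ : Measure X) (a : X) {p : ℝ} (hp : 0 ≤ p) {ρ : X → ℝ≥0∞}
    (hρ : Measurable ρ) :
    ∫⁻ y, (ρ y * hatW a y) ^ p ∂μ = ∫⁻ y, ρ y ^ p ∂(muHat μ a p) := by
  rw [muHat, MeasureTheory.lintegral_withDensity_eq_lintegral_mul μ (by fun_prop)
    (g := fun y => ρ y ^ p) (by fun_prop)]
  refine lintegral_congr fun y => ?_
  simp only [Pi.mul_apply, hatW]
  rw [ENNReal.mul_rpow_of_nonneg _ _ hp, ENNReal.ofReal_rpow_of_pos (by positivity),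
    Real.inv_rpow (sph_pos a y).le, sph_pow_eq a y p, mul_comm]

/-- The `p`-modulus of a curve family is the same in `(X,d,μ)` and in the
sphericalization. -/
private lemma sph_pMod (μ : Measure X) (a : X) {p : ℝ} (hp : 0 ≤ p)
    (Γ : Set (CurveD X dist)) :
    pMod p (muHat μ a p) (hatW a) Γ = pMod p μ (fun _ => 1) Γ := by
  unfold pMod
  apply le_antisymm
  · refine le_iInf fun ρ => le_iInf fun hρ => le_iInf fun hadm => ?_
    refine iInf_le_of_le (fun x => ρ x * ENNReal.ofReal ((1 + dist x a) ^ 2)) ?_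
    refine iInf_le_of_le (by fun_prop) ?_
    refine iInf_le_of_le (fun γ hγ => ?_) (le_of_eq (sph_energy μ a hp hρ))
    rw [sph_lineInt]; exact hadm γ hγ
  · refine le_iInf fun ρ => le_iInf fun hρ => le_iInf fun hadm => ?_
    refine iInf_le_of_le (fun x => ρ x * hatW a x) ?_
    refine iInf_le_of_le (by unfold hatW; fun_prop) ?_
    refine iInf_le_of_le (fun γ hγ => ?_) (le_of_eq (sph_energy' μ a hp hρ))
    refine le_trans (hadm γ hγ) (le_of_eq ?_)
    exact lintegral_congr fun t => (mul_one _).symm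
  
end SphAux

/-- `g` is a `p`-weak upper gradient of `u` in `Ω` with respect to `(d,μ)`
if and only if `ĝ(x) = g(x)(1+d(x,a))²` is a `p`-weak upper gradient of `u`
in `Ω` with respect to the sphericalization `(d̂_a, μ̂_a)`. -/
theorem pwug_sphericalization_invariant {X : Type*} [MetricSpace X] [MeasurableSpace X]
    [BorelSpace X] (μ : Measure X) (a : X) (p : ℝ) (hp : 1 < p)
    (hunb : ¬ Bornology.IsBounded (Set.univ : Set X))
    (Ω : Set X) (hΩ : IsOpen Ω) (u : X → EReal) (g : X → ℝ≥0∞) (hg : Measurable g) :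
    IsPWUGOn dist p μ (fun _ => 1) Ω u g ↔
      IsPWUGOn dist p (muHat μ a p) (hatW a) Ω u
        (fun x => g x * ENNReal.ofReal ((1 + dist x a) ^ 2)) := by
  have hp0 : (0:ℝ) ≤ p := by linarith
  constructor
  · rintro ⟨Γ₀, h0, h⟩
    exact ⟨Γ₀, by rw [sph_pMod μ a hp0]; exact h0,
      fun γ hγ hγ0 => by rw [sph_lineInt]; exact h γ hγ hγ0⟩
  · rintro ⟨Γ₀, h0, h⟩
    exact ⟨Γ₀, by rw [← sph_pMod μ a hp0]; exact h0,
      fun γ hγ hγ0 => by rw [← sph_lineInt a γ g]; exact h γ hγ hγ0⟩
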